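/- Let Λ be a commutative ring, let B be a d×n integer matrix, and let σ, σ′ be two d-dimensional nonsingular cones in ℤ^d. In the Laurent polynomial ring R = Λ[t₁^{±1},…,t_d^{±1}][X₀,…,X_n], define g_B(σ) = Σ_{i=1}^{n} X_i · ∏_{ε ∈ E(σ)} (∏_{l=1}^{d} t_l^{u_{σ,ε,l}})^{b_{ε i}^+}. Then there exists c = (c₁,…,c_d) ∈ ℤ^d such that g_B(σ′) = (∏_{l=1}^{d} t_l^{c_l}) · g_B(σ) in R; that is, g_B(σ) and g_B(σ′) differ by a unit monomial in the variables t₁,…,t_d. -/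

import Mathlib

open Finset

/-- `S` is the set of primitive edge generators of a `d`-dimensional nonsingular cone in
`ℤ^d`, i.e. `S` consists of `d` vectors forming a `ℤ`-basis of `ℤ^d`.  We identify such a
cone with its finite set of edge generators, and an edge with its primitive generator. -/
def IsNsCone (d : ℕ) (S : Finset (Fin d → ℤ)) : Prop :=
  S.card = d ∧ Submodule.span ℤ (S : Set (Fin d → ℤ)) = ⊤

/-- The Laurent polynomial ring `Λ[t₁^{±1}, …, t_d^{±1}]`, as the group algebra of `ℤ^d`. -/
abbrev Laurent (Λ : Type) [CommRing Λ] (d : ℕ) : Type :=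
  AddMonoidAlgebra Λ (Fin d →₀ ℤ)

/-- The monomial `∏_l t_l^{c_l}` in `Λ[t₁^{±1}, …, t_d^{±1}]`. -/
noncomputable def tmon (Λ : Type) [CommRing Λ] {d : ℕ} (c : Fin d → ℤ) : Laurent Λ d :=
  AddMonoidAlgebra.single (Finsupp.equivFunOnFinite.symm c) 1

/-- `bEdge B ε i = Σ_j ε_j b_{j i}`. -/
def bEdge {d n : ℕ} (B : Matrix (Fin d) (Fin n) ℤ) (ε : Fin d → ℤ) (i : Fin n) : ℤ :=
  ∑ j, ε j * B j i

/-- `b⁺_{ε i} = b_{ε i} - min {b_{ε j} : 1 ≤ j ≤ n}`, as a natural number. -/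
def bplus {d n : ℕ} (B : Matrix (Fin d) (Fin n) ℤ) (ε : Fin d → ℤ) (i : Fin n) : ℕ :=
  Finset.univ.sup fun j : Fin n => (bEdge B ε i - bEdge B ε j).toNat

/-- `g_B(σ) = Σ_{i=1}^n X_i ∏_{ε ∈ E(σ)} (∏_l t_l^{u_{σ,ε,l}})^{b⁺_{ε i}}` in
`Λ[t₁^{±1}, …, t_d^{±1}][X₀, …, X_n]`, where `u ε` is the dual basis vector `u_{σ,ε}`. -/
noncomputable def gB (Λ : Type) [CommRing Λ] {d n : ℕ} (B : Matrix (Fin d) (Fin n) ℤ)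
    (σ : Finset (Fin d → ℤ)) (u : (Fin d → ℤ) → Fin d → ℤ) :
    MvPolynomial (Fin (n + 1)) (Laurent Λ d) :=
  ∑ i : Fin n, MvPolynomial.X i.succ *
    MvPolynomial.C (∏ ε ∈ σ, tmon Λ (u ε) ^ bplus B ε i)

/-- for two `d`-dimensional nonsingular cones `σ, σ'` (with dual bases
`u, u'`), the polynomials `g_B(σ)` and `g_B(σ')` differ by a unit monomial in the
variables `t₁, …, t_d`:  `g_B(σ') = (∏_l t_l^{c_l}) ⬝ g_B(σ)` for some `c ∈ ℤ^d`. -/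
lemma symm_add {d : ℕ} (a b : Fin d → ℤ) :
    Finsupp.equivFunOnFinite.symm (a + b) =
      Finsupp.equivFunOnFinite.symm a + Finsupp.equivFunOnFinite.symm b := by
  ext l; simp [Finsupp.equivFunOnFinite]; rfl

lemma tmon_mul (Λ : Type) [CommRing Λ] {d : ℕ} (a b : Fin d → ℤ) :
    tmon Λ a * tmon Λ b = tmon Λ (a + b) := by
  unfold tmon
  rw [AddMonoidAlgebra.single_mul_single, one_mul, symm_add]

lemma tmon_zero (Λ : Type) [CommRing Λ] {d : ℕ} : tmon Λ (0 : Fin d → ℤ) = 1 := by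
  have : Finsupp.equivFunOnFinite.symm (0 : Fin d → ℤ) = 0 := by
    ext l; simp [Finsupp.equivFunOnFinite]
  rw [tmon, this, AddMonoidAlgebra.one_def]

lemma tmon_pow (Λ : Type) [CommRing Λ] {d : ℕ} (a : Fin d → ℤ) (k : ℕ) :
    tmon Λ a ^ k = tmon Λ (k • a) := by
  induction k with
  | zero => simpa using (tmon_zero Λ).symm
  | succ k ih => rw [pow_succ, ih, tmon_mul, succ_nsmul]

lemma tmon_prod (Λ : Type) [CommRing Λ] {d : ℕ} {ι : Type*} (s : Finset ι)
    (f : ι → Fin d → ℤ) : ∏ x ∈ s, tmon Λ (f x) = tmon Λ (∑ x ∈ s, f x) := by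
  induction s using Finset.cons_induction with
  | empty => simpa using (tmon_zero Λ).symm
  | cons a s ha ih => rw [Finset.prod_cons, ih, tmon_mul, Finset.sum_cons]

lemma dual_expand {d : ℕ} (σ : Finset (Fin d → ℤ))
    (hspan : Submodule.span ℤ ((σ : Set (Fin d → ℤ))) = ⊤)
    (u : (Fin d → ℤ) → Fin d → ℤ)
    (hu : ∀ ε ∈ σ, ∀ ε' ∈ σ, (∑ l, ε' l * u ε l) = if ε' = ε then 1 else 0)
    (w : Fin d → ℤ) :
    ∑ ε ∈ σ, (∑ j, ε j * w j) • u ε = w := by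
  set y : Fin d → ℤ := (∑ ε ∈ σ, (∑ j, ε j * w j) • u ε) - w with hy
  have key : ∀ ε' ∈ σ, ∑ l, ε' l * y l = 0 := by
    intro ε' hε'
    have h1 : ∑ l, ε' l * (∑ ε ∈ σ, (∑ j, ε j * w j) • u ε) l = ∑ j, ε' j * w j := by
      have : ∀ l, ε' l * (∑ ε ∈ σ, (∑ j, ε j * w j) • u ε) l
          = ∑ ε ∈ σ, (∑ j, ε j * w j) * (ε' l * u ε l) := by
        intro l
        simp only [Finset.sum_apply, Pi.smul_apply, smul_eq_mul, Finset.mul_sum]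
        exact Finset.sum_congr rfl fun ε _ => by ring
      rw [Finset.sum_congr rfl fun l _ => this l, Finset.sum_comm]
      calc ∑ ε ∈ σ, ∑ l, (∑ j, ε j * w j) * (ε' l * u ε l)
          = ∑ ε ∈ σ, (∑ j, ε j * w j) * (∑ l, ε' l * u ε l) := by
            exact Finset.sum_congr rfl fun ε _ => by rw [Finset.mul_sum]
        _ = ∑ ε ∈ σ, (∑ j, ε j * w j) * (if ε' = ε then 1 else 0) := by
            exact Finset.sum_congr rfl fun ε hε => by rw [hu ε hε ε' hε']
        _ = ∑ j, ε' j * w j := by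
            rw [Finset.sum_congr rfl fun ε _ => (by split <;> simp [*] :
              (∑ j, ε j * w j) * (if ε' = ε then 1 else 0)
                = if ε' = ε then (∑ j, ε j * w j) else 0)]
            simp [Finset.sum_ite_eq' σ ε' (fun ε => ∑ j, ε j * w j), hε']
    have : ∑ l, ε' l * y l
        = (∑ l, ε' l * (∑ ε ∈ σ, (∑ j, ε j * w j) • u ε) l) - ∑ l, ε' l * w l := by
      rw [← Finset.sum_sub_distrib]
      exact Finset.sum_congr rfl fun l _ => by simp [hy, mul_sub]
    rw [this, h1, sub_self]
  -- now use span = ⊤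
  have hy0 : y = 0 := by
    let f : (Fin d → ℤ) →ₗ[ℤ] ℤ := ∑ l, y l • LinearMap.proj l
    have hf : ∀ x, f x = ∑ l, x l * y l := by
      intro x
      simp [f, LinearMap.sum_apply, LinearMap.proj_apply, mul_comm]
    have hfz : f = 0 := by
      apply LinearMap.ext_on hspan
      intro x hx
      rw [hf x, key x hx, LinearMap.zero_apply]
    funext j
    have := congrArg (fun g => g (Pi.single j 1)) hfz
    simp only [LinearMap.zero_apply] at this
    rw [hf] at this
    rw [Finset.sum_eq_single j (fun l _ hl => by simp [Pi.single_eq_of_ne hl])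
      (fun h => absurd (Finset.mem_univ j) h)] at this
    simpa using this
  have h2 : (∑ ε ∈ σ, (∑ j, ε j * w j) • u ε) - w = 0 := hy ▸ hy0
  exact sub_eq_zero.mp h2

lemma bplus_cast {d n : ℕ} (B : Matrix (Fin d) (Fin n) ℤ) (ε : Fin d → ℤ) (i : Fin n)
    (hn : (Finset.univ : Finset (Fin n)).Nonempty) :
    (bplus B ε i : ℤ) = bEdge B ε i - Finset.univ.inf' hn (bEdge B ε) := by
  obtain ⟨j0, _, hj0⟩ := Finset.exists_mem_eq_inf' hn (bEdge B ε)
  have hb : bplus B ε i = (bEdge B ε i - bEdge B ε j0).toNat := by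
    apply le_antisymm
    · apply Finset.sup_le
      intro j _
      apply Int.toNat_le_toNat
      have h := Finset.inf'_le (bEdge B ε) (Finset.mem_univ j)
      rw [hj0] at h
      omega
    · exact Finset.le_sup (f := fun j => (bEdge B ε i - bEdge B ε j).toNat) (Finset.mem_univ j0)
  have h2 := Finset.inf'_le (bEdge B ε) (Finset.mem_univ i)
  rw [hj0] at h2
  rw [hb, hj0]
  omega


theorem stmt8 (Λ : Type) [CommRing Λ] (d n : ℕ) (B : Matrix (Fin d) (Fin n) ℤ)
    (σ σ' : Finset (Fin d → ℤ)) (hσ : IsNsCone d σ) (hσ' : IsNsCone d σ')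
    (u u' : (Fin d → ℤ) → Fin d → ℤ)
    (hu : ∀ ε ∈ σ, ∀ ε' ∈ σ, (∑ l, ε' l * u ε l) = if ε' = ε then 1 else 0)
    (hu' : ∀ ε ∈ σ', ∀ ε' ∈ σ', (∑ l, ε' l * u' ε l) = if ε' = ε then 1 else 0) :
    ∃ c : Fin d → ℤ,
      gB Λ B σ' u' = MvPolynomial.C (tmon Λ c) * gB Λ B σ u := by
  rcases Nat.eq_zero_or_pos n with hn | hn
  · subst hn
    exact ⟨0, by simp [gB]⟩
  have hne : (Finset.univ : Finset (Fin n)).Nonempty := by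
    have : Nonempty (Fin n) := ⟨⟨0, hn⟩⟩
    exact Finset.univ_nonempty
  have key : ∀ (τ : Finset (Fin d → ℤ)) (v : (Fin d → ℤ) → Fin d → ℤ),
      Submodule.span ℤ (τ : Set (Fin d → ℤ)) = ⊤ →
      (∀ ε ∈ τ, ∀ ε' ∈ τ, (∑ l, ε' l * v ε l) = if ε' = ε then 1 else 0) →
      ∀ i : Fin n, ∏ ε ∈ τ, tmon Λ (v ε) ^ bplus B ε i
        = tmon Λ ((fun j => B j i) - ∑ ε ∈ τ, (Finset.univ.inf' hne (bEdge B ε)) • v ε) := by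
    intro τ v hspan hv i
    calc ∏ ε ∈ τ, tmon Λ (v ε) ^ bplus B ε i
        = ∏ ε ∈ τ, tmon Λ ((bplus B ε i) • v ε) :=
          Finset.prod_congr rfl fun ε _ => tmon_pow Λ _ _
      _ = tmon Λ (∑ ε ∈ τ, (bplus B ε i) • v ε) := tmon_prod Λ τ _
      _ = tmon Λ ((fun j => B j i) - ∑ ε ∈ τ, (Finset.univ.inf' hne (bEdge B ε)) • v ε) := by
          congr 1
          have hd := dual_expand τ hspan v hv (fun j => B j i)
          calc ∑ ε ∈ τ, (bplus B ε i) • v ε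
              = ∑ ε ∈ τ, ((bEdge B ε i) • v ε - (Finset.univ.inf' hne (bEdge B ε)) • v ε) := by
                refine Finset.sum_congr rfl fun ε _ => ?_
                rw [← natCast_zsmul, bplus_cast B ε i hne, sub_smul]
            _ = (∑ ε ∈ τ, (bEdge B ε i) • v ε)
                - ∑ ε ∈ τ, (Finset.univ.inf' hne (bEdge B ε)) • v ε :=
                Finset.sum_sub_distrib _ _
            _ = (fun j => B j i) - ∑ ε ∈ τ, (Finset.univ.inf' hne (bEdge B ε)) • v ε := by
                rw [show (∑ ε ∈ τ, (bEdge B ε i) • v ε) = (fun j => B j i) from hd]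
  refine ⟨(∑ ε ∈ σ, (Finset.univ.inf' hne (bEdge B ε)) • u ε)
    - ∑ ε ∈ σ', (Finset.univ.inf' hne (bEdge B ε)) • u' ε, ?_⟩
  rw [gB, gB, Finset.mul_sum]
  refine Finset.sum_congr rfl fun i _ => ?_
  rw [key σ' u' hσ'.2 hu' i, key σ u hσ.2 hu i, mul_left_comm, ← MvPolynomial.C_mul,
    tmon_mul]
  congr 2
  abel
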